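/- Let r ≥ 1 and let n_1, …, n_r be non-negative integers with n = n_1 + ⋯ + n_r ≥ 1. Define V_1(n_1, …, n_r) = ((−1)^{n_1} / n) Σ_{d | gcd(n_1, …, n_r)} μ(d) (−1)^{n_1/d} · (n/d)! / ((n_1/d)! ⋯ (n_r/d)!). Then V_1(n_1, …, n_r) = M(n_1, …, n_r) + M(n_1/2, …, n_r/2) if n_1 ≡ 2 (mod 4) and 2 divides gcd(n_1, …, n_r), and V_1(n_1, …, n_r) = M(n_1, …, n_r) otherwise. -/

import Mathlib

/-- `Mword n = M(n_1, …, n_k) = (1/n) ∑_{d ∣ gcd(n_1,…,n_k)} μ(d) (n/d)! / ((n_1/d)!⋯(n_k/d)!)`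
with `n = n_1 + ⋯ + n_k` (equal to `0` when all `n_i` vanish). -/
noncomputable def Mword {k : ℕ} (n : Fin k → ℕ) : ℚ :=
  (1 / ((∑ i, n i : ℕ) : ℚ)) * ∑ d ∈ (Finset.univ.gcd n).divisors,
    ((ArithmeticFunction.moebius d : ℤ) : ℚ) *
      (Nat.factorial ((∑ i, n i) / d) : ℚ) / ∏ i, (Nat.factorial (n i / d) : ℚ)

/-- `V1word n = V_1(n_1, …, n_{k+1}) = ((-1)^{n_1}/n) ∑_{d ∣ gcd} μ(d) (-1)^{n_1/d}
(n/d)! / ((n_1/d)!⋯(n_{k+1}/d)!)` with `n = n_1 + ⋯ + n_{k+1}`. -/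
noncomputable def V1word {k : ℕ} (n : Fin (k + 1) → ℕ) : ℚ :=
  ((-1 : ℚ) ^ (n 0) / ((∑ i, n i : ℕ) : ℚ)) * ∑ d ∈ (Finset.univ.gcd n).divisors,
    ((ArithmeticFunction.moebius d : ℤ) : ℚ) * (-1 : ℚ) ^ (n 0 / d) *
      (Nat.factorial ((∑ i, n i) / d) : ℚ) / ∏ i, (Nat.factorial (n i / d) : ℚ)

private lemma negOnePow_parity {a b : ℕ} (h : a % 2 = b % 2) :
    (-1 : ℚ) ^ a * (-1 : ℚ) ^ b = 1 := by
  rcases Nat.even_or_odd a with ha | ha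
  · have hb : Even b := by rw [Nat.even_iff] at *; omega
    rw [ha.neg_one_pow, hb.neg_one_pow]; norm_num
  · have hb : Odd b := by rw [Nat.odd_iff] at *; omega
    rw [ha.neg_one_pow, hb.neg_one_pow]; norm_num

/-- Lemma (minnetje): for `r + 1 ≥ 1` non-negative integers `n_0, …, n_r` with
`n_0 + ⋯ + n_r ≥ 1`: `V_1(n_0,…,n_r) = M(n_0,…,n_r) + M(n_0/2,…,n_r/2)` if
`n_0 ≡ 2 (mod 4)` and `2 ∣ gcd(n_0,…,n_r)`, and `V_1(n_0,…,n_r) = M(n_0,…,n_r)`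
otherwise. -/
theorem V1word_eq_Mword (r : ℕ) (n : Fin (r + 1) → ℕ) (h : 1 ≤ ∑ i, n i) :
    V1word n =
      if n 0 % 4 = 2 ∧ 2 ∣ Finset.univ.gcd n then
        Mword n + Mword (fun i => n i / 2)
      else Mword n := by
  classical
  have hgd : ∀ i, Finset.univ.gcd n ∣ n i := fun i => Finset.gcd_dvd (Finset.mem_univ i)
  set g := Finset.univ.gcd n with hgdef
  set N := ∑ i, n i with hNdef
  have hgN : g ∣ N := Finset.dvd_sum fun i _ => hgd i
  have hN0 : N ≠ 0 := by omega
  have hNQ : (N : ℚ) ≠ 0 := Nat.cast_ne_zero.mpr hN0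
  have hg0 : g ≠ 0 := fun h0 => hN0 (zero_dvd_iff.mp (h0 ▸ hgN))
  by_cases hc : n 0 % 4 = 2 ∧ 2 ∣ g
  · obtain ⟨h42, h2g⟩ := hc
    rw [if_pos ⟨h42, h2g⟩]
    have h2i : ∀ i, 2 ∣ n i := fun i => h2g.trans (hgd i)
    have h2N : 2 ∣ N := h2g.trans hgN
    have hgcdhalf : (Finset.univ.gcd fun i => n i / 2) = g / 2 := by
      have h1 : (Finset.univ.gcd fun i : Fin (r+1) => 2 * (n i / 2))
          = 2 * Finset.univ.gcd fun i => n i / 2 := by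
        simpa using Finset.gcd_mul_left (s := (Finset.univ : Finset (Fin (r+1))))
          (f := fun i => n i / 2) (a := 2)
      have h2 : (Finset.univ.gcd fun i : Fin (r+1) => 2 * (n i / 2)) = g := by
        rw [hgdef]; congr 1; funext i; exact Nat.mul_div_cancel' (h2i i)
      omega
    have hsumhalf : (∑ i, n i / 2) = N / 2 := by
      have h1 : 2 * ∑ i, n i / 2 = N := by
        rw [Finset.mul_sum, hNdef]
        exact Finset.sum_congr rfl fun i _ => Nat.mul_div_cancel' (h2i i)
      omega
    have hg2odd : ¬ 2 ∣ g / 2 := by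
      intro hh
      have h4 : (4 : ℕ) ∣ g := by omega
      have h4n := h4.trans (hgd 0)
      omega
    have hN2 : ((N / 2 : ℕ) : ℚ) = (N : ℚ) / 2 := by
      rw [Nat.cast_div h2N (by norm_num)]; norm_num
    have hpow : (-1 : ℚ) ^ (n 0) = 1 := Even.neg_one_pow (by rw [Nat.even_iff]; omega)
    have hS : (∑ d ∈ g.divisors, ((ArithmeticFunction.moebius d : ℤ) : ℚ) * (-1 : ℚ) ^ (n 0 / d) *
          (Nat.factorial (N / d) : ℚ) / ∏ i, (Nat.factorial (n i / d) : ℚ))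
        = (∑ d ∈ g.divisors, ((ArithmeticFunction.moebius d : ℤ) : ℚ) *
            (Nat.factorial (N / d) : ℚ) / ∏ i, (Nat.factorial (n i / d) : ℚ))
          + 2 * ∑ e ∈ (g / 2).divisors, ((ArithmeticFunction.moebius e : ℤ) : ℚ) *
            (Nat.factorial (N / 2 / e) : ℚ) / ∏ i, (Nat.factorial (n i / 2 / e) : ℚ) := by
      rw [← Finset.sum_filter_add_sum_filter_not g.divisors (fun d => 2 ∣ d)
            (fun d => ((ArithmeticFunction.moebius d : ℤ) : ℚ) * (-1 : ℚ) ^ (n 0 / d) *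
              (Nat.factorial (N / d) : ℚ) / ∏ i, (Nat.factorial (n i / d) : ℚ)),
          ← Finset.sum_filter_add_sum_filter_not g.divisors (fun d => 2 ∣ d)
            (fun d => ((ArithmeticFunction.moebius d : ℤ) : ℚ) *
              (Nat.factorial (N / d) : ℚ) / ∏ i, (Nat.factorial (n i / d) : ℚ))]
      have hodd : (∑ d ∈ g.divisors.filter (fun d => ¬ 2 ∣ d),
            ((ArithmeticFunction.moebius d : ℤ) : ℚ) * (-1 : ℚ) ^ (n 0 / d) *
              (Nat.factorial (N / d) : ℚ) / ∏ i, (Nat.factorial (n i / d) : ℚ))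
          = ∑ d ∈ g.divisors.filter (fun d => ¬ 2 ∣ d),
            ((ArithmeticFunction.moebius d : ℤ) : ℚ) *
              (Nat.factorial (N / d) : ℚ) / ∏ i, (Nat.factorial (n i / d) : ℚ) := by
        refine Finset.sum_congr rfl fun d hd => ?_
        obtain ⟨hd1, hd2⟩ := Finset.mem_filter.mp hd
        have hdg : d ∣ g := (Nat.mem_divisors.mp hd1).1
        have hd0 : d ≠ 0 := fun h0 => by simp [h0] at hdg; exact hg0 hdg
        obtain ⟨q, hq⟩ := hdg.trans (hgd 0)
        have hq' : n 0 / d = q := by rw [hq, Nat.mul_div_cancel_left _ (Nat.pos_of_ne_zero hd0)]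
        have h2q : 2 ∣ q := by
          rcases (Nat.Prime.dvd_mul Nat.prime_two).mp (hq ▸ h2i 0) with h | h
          · exact absurd h hd2
          · exact h
        have : (-1 : ℚ) ^ (n 0 / d) = 1 := by
          rw [hq']; exact Even.neg_one_pow (by rw [Nat.even_iff]; omega)
        rw [this]; ring
      have heven1 : (∑ d ∈ g.divisors.filter (fun d => 2 ∣ d),
            ((ArithmeticFunction.moebius d : ℤ) : ℚ) * (-1 : ℚ) ^ (n 0 / d) *
              (Nat.factorial (N / d) : ℚ) / ∏ i, (Nat.factorial (n i / d) : ℚ))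
          = - ∑ d ∈ g.divisors.filter (fun d => 2 ∣ d),
            ((ArithmeticFunction.moebius d : ℤ) : ℚ) *
              (Nat.factorial (N / d) : ℚ) / ∏ i, (Nat.factorial (n i / d) : ℚ) := by
        rw [← Finset.sum_neg_distrib]
        refine Finset.sum_congr rfl fun d hd => ?_
        obtain ⟨hd1, hd2⟩ := Finset.mem_filter.mp hd
        have hdg : d ∣ g := (Nat.mem_divisors.mp hd1).1
        have hd0 : d ≠ 0 := fun h0 => by simp [h0] at hdg; exact hg0 hdg
        obtain ⟨q, hq⟩ := hdg.trans (hgd 0)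
        have hq' : n 0 / d = q := by rw [hq, Nat.mul_div_cancel_left _ (Nat.pos_of_ne_zero hd0)]
        have hqodd : ¬ 2 ∣ q := by
          intro h2q
          obtain ⟨a, ha⟩ := hd2
          obtain ⟨b, hb⟩ := h2q
          have : (4 : ℕ) ∣ n 0 := ⟨a * b, by rw [hq, ha, hb]; ring⟩
          omega
        have : (-1 : ℚ) ^ (n 0 / d) = -1 := by
          rw [hq']; exact Odd.neg_one_pow (by rw [Nat.odd_iff]; omega)
        rw [this]; ring
      have heven2 : (∑ d ∈ g.divisors.filter (fun d => 2 ∣ d),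
            ((ArithmeticFunction.moebius d : ℤ) : ℚ) *
              (Nat.factorial (N / d) : ℚ) / ∏ i, (Nat.factorial (n i / d) : ℚ))
          = - ∑ e ∈ (g / 2).divisors, ((ArithmeticFunction.moebius e : ℤ) : ℚ) *
            (Nat.factorial (N / 2 / e) : ℚ) / ∏ i, (Nat.factorial (n i / 2 / e) : ℚ) := by
        rw [← Finset.sum_neg_distrib]
        refine Finset.sum_nbij' (fun d => d / 2) (fun e => 2 * e) ?_ ?_ ?_ ?_ ?_
        · intro d hd
          obtain ⟨hd1, hd2⟩ := Finset.mem_filter.mp hd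
          have hdg : d ∣ g := (Nat.mem_divisors.mp hd1).1
          obtain ⟨a, ha⟩ := hd2
          obtain ⟨c, hcc⟩ := hdg
          refine Nat.mem_divisors.mpr ⟨⟨c, ?_⟩, by omega⟩
          rw [hcc, ha, Nat.mul_assoc, Nat.mul_div_cancel_left _ two_pos,
            Nat.mul_div_cancel_left _ two_pos]
        · intro e he
          obtain ⟨he1, he2⟩ := Nat.mem_divisors.mp he
          refine Finset.mem_filter.mpr ⟨Nat.mem_divisors.mpr ⟨?_, hg0⟩, ⟨e, rfl⟩⟩
          obtain ⟨c, hcc⟩ := he1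
          refine ⟨c, ?_⟩
          have hg2 : g = 2 * (g / 2) := by omega
          rw [hg2, hcc]
          exact (Nat.mul_assoc 2 e c).symm
        · intro d hd
          obtain ⟨_, hd2⟩ := Finset.mem_filter.mp hd
          omega
        · intro e _; omega
        · intro d hd
          obtain ⟨hd1, hd2⟩ := Finset.mem_filter.mp hd
          have hdg : d ∣ g := (Nat.mem_divisors.mp hd1).1
          have hd0 : d ≠ 0 := fun h0 => by simp [h0] at hdg; exact hg0 hdg
          obtain ⟨e, he⟩ := hd2
          have he2 : d / 2 = e := by omega
          have heodd : ¬ 2 ∣ e := by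
            intro h2e
            refine hg2odd ?_
            obtain ⟨c, hcc⟩ := hdg
            obtain ⟨b, hb⟩ := h2e
            have hgg : g = 2 * (2 * (b * c)) := by rw [hcc, he, hb]; ring
            exact ⟨b * c, by rw [hgg, Nat.mul_div_cancel_left _ two_pos]⟩
          have hmu : (ArithmeticFunction.moebius d : ℤ)
              = - (ArithmeticFunction.moebius e : ℤ) := by
            rw [he, ArithmeticFunction.isMultiplicative_moebius.map_mul_of_coprime
              (Nat.prime_two.coprime_iff_not_dvd.mpr heodd),
              ArithmeticFunction.moebius_apply_prime Nat.prime_two]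
            ring
          have hNd : N / d = N / 2 / (d / 2) := by
            rw [Nat.div_div_eq_div_mul, he2, ← he]
          have hnd : ∀ i, n i / d = n i / 2 / (d / 2) := fun i => by
            rw [Nat.div_div_eq_div_mul, he2, ← he]
          rw [hNd, he2, hmu]
          push_cast
          rw [show (∏ i, (Nat.factorial (n i / d) : ℚ)) = ∏ i, (Nat.factorial (n i / 2 / e) : ℚ)
            from Finset.prod_congr rfl fun i _ => by rw [hnd i, he2]]
          ring
      rw [hodd, heven1, heven2]; ring
    simp only [V1word, Mword]
    rw [← hgdef, ← hNdef, hgcdhalf, hsumhalf, hpow, hN2, hS]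
    field_simp
  · rw [if_neg hc]
    simp only [V1word, Mword]
    rw [← hgdef, ← hNdef, div_mul_eq_mul_div, one_div_mul_eq_div]
    congr 1
    rw [Finset.mul_sum]
    refine Finset.sum_congr rfl fun d hd => ?_
    rcases eq_or_ne (ArithmeticFunction.moebius d : ℤ) 0 with h0 | h0
    · simp [h0]
    have hsq : Squarefree d := ArithmeticFunction.moebius_ne_zero_iff_squarefree.mp h0
    have hdg : d ∣ g := (Nat.mem_divisors.mp hd).1
    have hd0 : d ≠ 0 := hsq.ne_zero
    obtain ⟨q, hq⟩ := hdg.trans (hgd 0)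
    have hq' : n 0 / d = q := by rw [hq, Nat.mul_div_cancel_left _ (Nat.pos_of_ne_zero hd0)]
    have hkey : n 0 % 2 = (n 0 / d) % 2 := by
      rw [hq']
      by_cases h2 : 2 ∣ g
      · have h2n0 : 2 ∣ n 0 := h2.trans (hgd 0)
        have h42 : n 0 % 4 ≠ 2 := fun hh => hc ⟨hh, h2⟩
        have h4 : (4 : ℕ) ∣ n 0 := by omega
        have h2q : 2 ∣ q := by
          by_contra h2q
          have hcop : Nat.Coprime 4 q := by
            have : Nat.Coprime 2 q := Nat.prime_two.coprime_iff_not_dvd.mpr h2q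
            simpa using Nat.Coprime.pow_left 2 this
          have h4d : (4 : ℕ) ∣ d := hcop.dvd_of_dvd_mul_right (hq ▸ h4)
          have : IsUnit (2 : ℕ) := hsq 2 (by omega)
          simp at this
        omega
      · have hd2 : ¬ 2 ∣ d := fun hh => h2 (hh.trans hdg)
        by_cases h2q : 2 ∣ q
        · have h2n : 2 ∣ n 0 := hq ▸ Dvd.dvd.mul_left h2q d
          omega
        · have h2n : ¬ 2 ∣ n 0 := fun hh => by
            rcases (Nat.Prime.dvd_mul Nat.prime_two).mp (hq ▸ hh) with hx | hx
            exacts [hd2 hx, h2q hx]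
          omega
    have h1 : (-1 : ℚ) ^ (n 0) * (((ArithmeticFunction.moebius d : ℤ) : ℚ) *
        (-1 : ℚ) ^ (n 0 / d)) = ((ArithmeticFunction.moebius d : ℤ) : ℚ) := by
      calc (-1 : ℚ) ^ (n 0) * (((ArithmeticFunction.moebius d : ℤ) : ℚ) * (-1 : ℚ) ^ (n 0 / d))
          = ((-1 : ℚ) ^ (n 0) * (-1 : ℚ) ^ (n 0 / d)) * ((ArithmeticFunction.moebius d : ℤ) : ℚ) := by
            ring
        _ = _ := by rw [negOnePow_parity hkey, one_mul]
    calc (-1 : ℚ) ^ (n 0) * (((ArithmeticFunction.moebius d : ℤ) : ℚ) * (-1 : ℚ) ^ (n 0 / d) *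
          (Nat.factorial (N / d) : ℚ) / ∏ i, (Nat.factorial (n i / d) : ℚ))
        = ((-1 : ℚ) ^ (n 0) * (((ArithmeticFunction.moebius d : ℤ) : ℚ) * (-1 : ℚ) ^ (n 0 / d))) *
          (Nat.factorial (N / d) : ℚ) / ∏ i, (Nat.factorial (n i / d) : ℚ) := by ring
      _ = _ := by rw [h1]
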